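/- Let X₁, X₂ : ℝ³ → ℝ³ be C¹ maps, f : ℝ³ → ℝ be C², and p ∈ ℝ³ with f(p) = 0, Df(p) ≠ 0, (X₁f)(p) = (X₂f)(p) = 0 and X₂(X₁f)(p) − X₁(X₂f)(p) ≠ 0. Then there exist an index i ∈ {1,2} and an open neighborhood U of p such that the C¹ map g : ℝ³ → ℝ², g(x) = (f(x), (X_if)(x)), has surjective Fréchet derivative at p and satisfies {x ∈ U : f(x) = 0 ∧ (X₁f)(x) = 0 ∧ (X₂f)(x) = 0} ⊆ g⁻¹({0}). (Thus, near p, the characteristic set of the surface f⁻¹(0) is contained in the one-dimensional C¹ submanifold g⁻¹({0}).) -/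

import Mathlib

lemma aux_surj (φ ψ : (Fin 3 → ℝ) →L[ℝ] ℝ) (hφ : φ ≠ 0)
    (u : Fin 3 → ℝ) (hu0 : φ u = 0) (hu : ψ u ≠ 0) :
    Function.Surjective (φ.prod ψ) := by
  obtain ⟨v, hv⟩ : ∃ v, φ v ≠ 0 := by
    by_contra h
    push_neg at h
    exact hφ (ContinuousLinearMap.ext fun x => by simpa using h x)
  rintro ⟨a, b⟩
  refine ⟨(a / φ v) • v + ((b - (a / φ v) * ψ v) / ψ u) • u, ?_⟩
  have : φ u = 0 := hu0
  refine Prod.ext ?_ ?_ <;>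
    simp only [ContinuousLinearMap.prod_apply, map_add, map_smul, smul_eq_mul, hu0,
      Prod.fst_add, Prod.snd_add, Prod.smul_mk, mul_zero, add_zero] <;> field_simp <;> ring

/-- Local form of the paper's Lemma 2.2: if `f` is a C² submersion at `p`,
`(X₁f)(p) = (X₂f)(p) = 0`, and the contact condition `[X₂,X₁]f(p) ≠ 0` holds, then
for some `i ∈ {1,2}` the C¹ map `g = (f, X_if)` has surjective differential at `p`
and, on a neighbourhood `U` of `p`, the characteristic set
`{f = 0, X₁f = 0, X₂f = 0}` is contained in `g⁻¹(0)` (a one-dimensional C¹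
submanifold). -/
theorem characteristic_set_in_one_dim_submanifold
    (X₁ X₂ : (Fin 3 → ℝ) → (Fin 3 → ℝ)) (f : (Fin 3 → ℝ) → ℝ)
    (hX₁ : ContDiff ℝ 1 X₁) (hX₂ : ContDiff ℝ 1 X₂) (hf : ContDiff ℝ 2 f)
    (X₁f X₂f : (Fin 3 → ℝ) → ℝ)
    (hX₁f : X₁f = fun x => fderiv ℝ f x (X₁ x))
    (hX₂f : X₂f = fun x => fderiv ℝ f x (X₂ x))
    (p : Fin 3 → ℝ) (hfp : f p = 0) (hdfp : fderiv ℝ f p ≠ 0)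
    (hp1 : X₁f p = 0) (hp2 : X₂f p = 0)
    (hcontact : fderiv ℝ X₁f p (X₂ p) - fderiv ℝ X₂f p (X₁ p) ≠ 0) :
    ∃ Xif : (Fin 3 → ℝ) → ℝ, (Xif = X₁f ∨ Xif = X₂f) ∧
      ∃ U : Set (Fin 3 → ℝ), IsOpen U ∧ p ∈ U ∧
        ∃ g : (Fin 3 → ℝ) → ℝ × ℝ, g = (fun x => (f x, Xif x)) ∧
          ContDiff ℝ 1 g ∧
          Function.Surjective (fderiv ℝ g p) ∧
          {x ∈ U | f x = 0 ∧ X₁f x = 0 ∧ X₂f x = 0} ⊆ g ⁻¹' {0} := by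
  have hf' : ContDiff ℝ 1 (fderiv ℝ f) := hf.fderiv_right (by norm_num)
  have h1 : ContDiff ℝ 1 X₁f := by rw [hX₁f]; exact hf'.clm_apply hX₁
  have h2 : ContDiff ℝ 1 X₂f := by rw [hX₂f]; exact hf'.clm_apply hX₂
  have hfd : DifferentiableAt ℝ f p :=
    (hf.differentiable two_ne_zero).differentiableAt
  have key : ∀ Xif : (Fin 3 → ℝ) → ℝ, (Xif = X₁f ∨ Xif = X₂f) →
      ContDiff ℝ 1 Xif → ∀ u : Fin 3 → ℝ, fderiv ℝ f p u = 0 →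
      fderiv ℝ Xif p u ≠ 0 →
      ∃ Xif' : (Fin 3 → ℝ) → ℝ, (Xif' = X₁f ∨ Xif' = X₂f) ∧
      ∃ U : Set (Fin 3 → ℝ), IsOpen U ∧ p ∈ U ∧
        ∃ g : (Fin 3 → ℝ) → ℝ × ℝ, g = (fun x => (f x, Xif' x)) ∧
          ContDiff ℝ 1 g ∧
          Function.Surjective (fderiv ℝ g p) ∧
          {x ∈ U | f x = 0 ∧ X₁f x = 0 ∧ X₂f x = 0} ⊆ g ⁻¹' {0} := by
    intro Xif hor hXi u hu0 hu
    refine ⟨Xif, hor, Set.univ, isOpen_univ, Set.mem_univ p,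
      fun x => (f x, Xif x), rfl, ContDiff.prodMk (hf.of_le one_le_two) hXi, ?_, ?_⟩
    · have hg : fderiv ℝ (fun x => (f x, Xif x)) p =
          (fderiv ℝ f p).prod (fderiv ℝ Xif p) :=
        (HasFDerivAt.prodMk hfd.hasFDerivAt (hXi.differentiable one_ne_zero p).hasFDerivAt).fderiv
      rw [hg]
      exact aux_surj _ _ hdfp u hu0 hu
    · rintro x ⟨-, hx1, hx2, hx3⟩
      rcases hor with h | h <;> simp [Set.mem_preimage, h, hx1, hx2, hx3, Prod.ext_iff]
  by_cases hc : fderiv ℝ X₁f p (X₂ p) = 0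
  · have hd : fderiv ℝ X₂f p (X₁ p) ≠ 0 := by
      intro h; apply hcontact; rw [hc, h, sub_zero]
    refine key X₂f (Or.inr rfl) h2 (X₁ p) ?_ hd
    rw [hX₁f] at hp1; exact hp1
  · refine key X₁f (Or.inl rfl) h1 (X₂ p) ?_ hc
    rw [hX₂f] at hp2; exact hp2
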